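/- The ruler sequence x = 0102010301020104⋯ (limit of the Zimin words Z_{n+1} = Z_n n Z_n over the alphabet ℕ) satisfies n < inrc_x(n) ≤ 2n for all n ≥ 1. -/

import Mathlib

/-- The ruler sequence (limit of the Zimin words): x_i = ν₂(i+1). -/
def ruler (i : ℕ) : ℕ := padicValNat 2 (i + 1)

/-- The set of `m` such that the first `m` length-`n` factors of `x`
are pairwise distinct; `inrc x n` is its greatest element. -/
def inrcSet {α : Type*} (x : ℕ → α) (n : ℕ) : Set ℕ :=
  {m | ∀ i < m, ∀ j < m, (∀ d < n, x (i + d) = x (j + d)) → i = j}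

private instance : Fact (Nat.Prime 2) := ⟨Nat.prime_two⟩

private lemma ruler_dvd_iff_le {k m : ℕ} (hm : m ≠ 0) :
    2 ^ k ∣ m ↔ k ≤ padicValNat 2 m :=
  padicValNat_dvd_iff_le hm

private lemma ruler_val_add_pow {k m : ℕ} (hm : m ≠ 0) (h : ¬ (2 ^ k ∣ m)) :
    padicValNat 2 (m + 2 ^ k) = padicValNat 2 m := by
  set v := padicValNat 2 m with hv
  have hvk : v < k := by
    by_contra hle
    exact h (dvd_trans (pow_dvd_pow 2 (not_lt.mp hle)) pow_padicValNat_dvd)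
  have h1 : 2 ^ v ∣ m + 2 ^ k :=
    dvd_add pow_padicValNat_dvd (pow_dvd_pow 2 hvk.le)
  have hne : m + 2 ^ k ≠ 0 := by positivity
  have h2 : v ≤ padicValNat 2 (m + 2 ^ k) := (ruler_dvd_iff_le hne).mp h1
  have h3 : padicValNat 2 (m + 2 ^ k) ≤ v := by
    by_contra hlt
    push_neg at hlt
    have hd : 2 ^ (v+1) ∣ m + 2 ^ k := (ruler_dvd_iff_le hne).mpr hlt
    have hd2 : 2 ^ (v+1) ∣ 2 ^ k := pow_dvd_pow 2 hvk
    have : 2 ^ (v+1) ∣ m :=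
      (Nat.dvd_add_right hd2).mp (by rwa [Nat.add_comm m (2 ^ k)] at hd)
    have := (ruler_dvd_iff_le hm).mp this
    omega
  omega

private lemma ruler_no_period {i j n : ℕ} (hij : i < j) (hjn : j ≤ n)
    (h : ∀ d < n, ruler (i + d) = ruler (j + d)) : False := by
  set p := j - i with hp
  have hp0 : 0 < p := by omega
  have hpn : p ≤ n := by omega
  have hshift : ∀ u, i ≤ u → u < i + p → ruler u = ruler (u + p) := by
    intro u hu1 hu2
    have hd : u - i < n := by omega
    have := h (u - i) hd
    have e1 : i + (u - i) = u := by omega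
    have e2 : j + (u - i) = u + p := by omega
    rwa [e1, e2] at this
  obtain ⟨t, ht, hmax⟩ := Finset.exists_max_image (Finset.Ico i (i + p)) ruler
    ⟨i, by simp [hp0]⟩
  rw [Finset.mem_Ico] at ht
  set v := ruler t with hvdef
  have hv1 : padicValNat 2 (t + 1) = v := rfl
  have hv2 : padicValNat 2 (t + p + 1) = v := by
    have := (hshift t ht.1 ht.2).symm
    exact this
  have d1 : 2 ^ v ∣ t + 1 := by rw [ruler_dvd_iff_le (by omega)]; omega
  have nd1 : ¬ 2 ^ (v + 1) ∣ t + 1 := by rw [ruler_dvd_iff_le (by omega)]; omega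
  have d2 : 2 ^ v ∣ t + p + 1 := by rw [ruler_dvd_iff_le (by omega)]; omega
  have nd2 : ¬ 2 ^ (v + 1) ∣ t + p + 1 := by rw [ruler_dvd_iff_le (by omega)]; omega
  obtain ⟨a, ha⟩ := d1
  obtain ⟨b, hb⟩ := d2
  have hpv : 0 < 2 ^ v := Nat.pow_pos (by norm_num)
  have haodd : ¬ 2 ∣ a := by
    intro ⟨c, hc⟩
    exact nd1 ⟨c, by rw [ha, hc, pow_succ]; ring⟩
  have hbodd : ¬ 2 ∣ b := by
    intro ⟨c, hc⟩
    exact nd2 ⟨c, by rw [hb, hc, pow_succ]; ring⟩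
  have hab : a < b := by
    have : 2 ^ v * a < 2 ^ v * b := by omega
    exact lt_of_mul_lt_mul_left this (Nat.zero_le _)
  have hab2 : a + 1 < b := by
    rcases Nat.lt_or_ge (a + 1) b with h' | h'
    · exact h'
    · have : a + 1 = b := by omega
      omega
  have ha1even : 2 ∣ a + 1 := by omega
  set s1 := 2 ^ v * (a + 1) with hs1
  have hlt1 : t + 1 < s1 := by
    rw [ha, hs1]; exact Nat.mul_lt_mul_of_le_of_lt (le_refl _) (by omega) hpv
  have hlt2 : s1 < t + p + 1 := by
    rw [hb, hs1]; exact Nat.mul_lt_mul_of_le_of_lt (le_refl _) hab2 hpv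
  have hs1val : v + 1 ≤ padicValNat 2 s1 := by
    rw [← ruler_dvd_iff_le (by positivity)]
    obtain ⟨c, hc⟩ := ha1even
    exact ⟨c, by rw [hs1, hc, pow_succ]; ring⟩
  set s := s1 - 1 with hs
  have hsval : v + 1 ≤ ruler s := by
    have : s + 1 = s1 := by omega
    rw [ruler, this]; exact hs1val
  rcases Nat.lt_or_ge s (i + p) with hcase | hcase
  · have hmem : s ∈ Finset.Ico i (i + p) := by rw [Finset.mem_Ico]; omega
    have := hmax s hmem
    omega
  · have hu1 : i ≤ s - p := by omega
    have hu2 : s - p < i + p := by omega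
    have heq : ruler (s - p) = ruler s := by
      have := hshift (s - p) hu1 hu2
      rwa [Nat.sub_add_cancel (by omega)] at this
    have hmem : s - p ∈ Finset.Ico i (i + p) := by rw [Finset.mem_Ico]; omega
    have := hmax (s - p) hmem
    omega

/-- the ruler sequence satisfies n < inrc_x(n) ≤ 2n for all
n ≥ 1: the first n+1 length-n factors are pairwise distinct, and every
element of the inrc set (in particular the maximum) is ≤ 2n. -/
theorem inrc_ruler (n : ℕ) (hn : 1 ≤ n) :
    n + 1 ∈ inrcSet ruler n ∧ ∀ m ∈ inrcSet ruler n, m ≤ 2 * n := by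
  constructor
  · intro i hi j hj hwin
    rcases lt_trichotomy i j with h | h | h
    · exact absurd (ruler_no_period h (by omega) hwin) (by simp)
    · exact h
    · exact absurd (ruler_no_period h (by omega) fun d hd => (hwin d hd).symm) (by simp)
  · intro m hm
    by_contra hcon
    push_neg at hcon
    set k := Nat.log 2 n + 1 with hk
    have hk1 : n < 2 ^ k := Nat.lt_pow_succ_log_self (by norm_num) n
    have hk2 : 2 ^ k ≤ 2 * n := by
      rw [hk, pow_succ]
      have := Nat.pow_log_le_self 2 (by omega : n ≠ 0)
      omega
    have hpos : 0 < 2 ^ k := Nat.pow_pos (by norm_num)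
    have := hm 0 (by omega) (2 ^ k) (by omega) ?_
    · omega
    · intro d hd
      have hnd : ¬ 2 ^ k ∣ d + 1 := fun hdvd => by
        have := Nat.le_of_dvd (by omega) hdvd; omega
      have := ruler_val_add_pow (by omega : d + 1 ≠ 0) hnd
      simp only [ruler, Nat.zero_add]
      rw [show 2 ^ k + d + 1 = (d + 1) + 2 ^ k by ring, this]
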